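/- Let X ~ Γ_λ(α,β) with λ ∈ (0,1), α > 0, β > 0 and α + 2 < 1/λ. Then the expectation E[X] = α / (β(1 - λ(α+1))). -/

import Mathlib

open MeasureTheory Set Filter Topology

/-- The degenerate gamma function `Γ_λ(s) = ∫_0^∞ (1+λt)^{-1/λ} t^{s-1} dt`. -/
noncomputable def degGamma (lam s : ℝ) : ℝ :=
  ∫ t in Set.Ioi (0:ℝ), (1 + lam * t) ^ (-1/lam) * t ^ (s - 1)

/-- The probability density function of the degenerate gamma distribution `Γ_λ(α,β)`. -/
noncomputable def degGammaPdf (lam α β x : ℝ) : ℝ :=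
  if 0 < x then (1 / degGamma lam α) * β * (1 + lam * β * x) ^ (-1/lam) * (β * x) ^ (α - 1)
  else 0


lemma integrableOn_deg {lam c s : ℝ} (hlam : 0 < lam) (hs : 0 < s) (hcs : s + c < 0) :
    IntegrableOn (fun t : ℝ => (1 + lam * t) ^ c * t ^ (s - 1)) (Set.Ioi 0) := by
  have hc : c < 0 := by linarith
  have hcont : ContinuousOn (fun t : ℝ => (1 + lam * t) ^ c * t ^ (s - 1)) (Set.Ioi 0) := by
    apply ContinuousOn.mul
    · exact (continuousOn_const.add (continuousOn_const.mul continuousOn_id)).rpow_const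
        fun t ht => Or.inl (by have : (0:ℝ) < t := ht; show 1 + lam * t ≠ 0; positivity)
    · exact continuousOn_id.rpow_const fun t ht => Or.inl (ne_of_gt ht)
  have hmeas : AEStronglyMeasurable (fun t : ℝ => (1 + lam * t) ^ c * t ^ (s - 1))
      (volume.restrict (Set.Ioi 0)) := hcont.aestronglyMeasurable measurableSet_Ioi
  rw [← Set.Ioc_union_Ioi_eq_Ioi (zero_le_one)]
  apply MeasureTheory.IntegrableOn.union
  · -- on Ioc 0 1
    have hg : IntegrableOn (fun t : ℝ => t ^ (s - 1)) (Set.Ioc 0 1) := by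
      have := intervalIntegral.intervalIntegrable_rpow' (a := 0) (b := 1)
        (show (-1:ℝ) < s - 1 by linarith)
      rwa [intervalIntegrable_iff_integrableOn_Ioc_of_le zero_le_one] at this
    refine hg.integrable.mono (hmeas.mono_measure
      (Measure.restrict_mono (Set.Ioc_subset_Ioi_self) le_rfl)) ?_
    refine (ae_restrict_iff' measurableSet_Ioc).mpr (ae_of_all _ fun t ht => ?_)
    have ht0 : (0:ℝ) < t := ht.1
    have h1 : (0:ℝ) < 1 + lam * t := by positivity
    have hb : (1 + lam * t) ^ c ≤ 1 :=
      Real.rpow_le_one_of_one_le_of_nonpos (by nlinarith) hc.le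
    rw [Real.norm_eq_abs, Real.norm_eq_abs, abs_of_nonneg (by positivity),
      abs_of_nonneg (by positivity)]
    calc (1 + lam * t) ^ c * t ^ (s - 1) ≤ 1 * t ^ (s - 1) := by
          apply mul_le_mul_of_nonneg_right hb (by positivity)
      _ = t ^ (s - 1) := one_mul _
  · -- on Ioi 1
    have hg : IntegrableOn (fun t : ℝ => lam ^ c * t ^ (s - 1 + c)) (Set.Ioi 1) :=
      (integrableOn_Ioi_rpow_of_lt (by linarith) one_pos).const_mul _
    refine hg.integrable.mono (hmeas.mono_measure
      (Measure.restrict_mono (Set.Ioi_subset_Ioi zero_le_one) le_rfl)) ?_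
    refine (ae_restrict_iff' measurableSet_Ioi).mpr (ae_of_all _ fun t ht => ?_)
    have ht1 : (1:ℝ) < t := ht
    have ht0 : (0:ℝ) < t := by linarith
    have hlt : (0:ℝ) < lam * t := by positivity
    have h1 : (0:ℝ) < 1 + lam * t := by positivity
    have hb : (1 + lam * t) ^ c ≤ (lam * t) ^ c :=
      Real.rpow_le_rpow_of_nonpos hlt (by linarith) hc.le
    rw [Real.norm_eq_abs, Real.norm_eq_abs, abs_of_nonneg (by positivity),
      abs_of_nonneg (by positivity)]
    calc (1 + lam * t) ^ c * t ^ (s - 1)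
        ≤ (lam * t) ^ c * t ^ (s - 1) := mul_le_mul_of_nonneg_right hb (by positivity)
      _ = lam ^ c * t ^ (s - 1 + c) := by
          rw [Real.mul_rpow hlam.le ht0.le, Real.rpow_add ht0]
          ring

lemma degGamma_pos {lam s : ℝ} (hlam : 0 < lam) (hs : 0 < s) (h : s < 1 / lam) :
    0 < degGamma lam s := by
  have hint : IntegrableOn (fun t : ℝ => (1 + lam * t) ^ (-1/lam) * t ^ (s - 1)) (Set.Ioi 0) :=
    integrableOn_deg hlam hs (by rw [neg_div]; linarith)
  rw [degGamma, setIntegral_pos_iff_support_of_nonneg_ae]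
  · refine lt_of_lt_of_le ?_ (measure_mono (s := Set.Ioi 0) ?_)
    · simp [Real.volume_Ioi]
    · intro t ht
      refine ⟨?_, ht⟩
      have ht' : (0:ℝ) < t := ht
      have h1 : (0:ℝ) < 1 + lam * t := by positivity
      simp only [Function.mem_support]
      positivity
  · refine (ae_restrict_iff' measurableSet_Ioi).mpr (ae_of_all _ fun t ht => ?_)
    have ht' : (0:ℝ) < t := ht
    have h1 : (0:ℝ) < 1 + lam * t := by positivity
    positivity
  · exact hint

lemma degGamma_rec {lam s : ℝ} (hl0 : 0 < lam) (hl1 : lam < 1) (hs : 0 < s)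
    (h : s + 1 < 1 / lam) :
    (1 - lam * (s + 1)) * degGamma lam (s + 1) = s * degGamma lam s := by
  have he : lam * (1 / lam) = 1 := by field_simp
  have hil : lam * (s + 1) < 1 := by nlinarith [mul_lt_mul_of_pos_left h hl0]
  -- integrand functions
  set A : ℝ → ℝ := fun t => (1 + lam * t) ^ (-1/lam) * t ^ s with hA
  set B : ℝ → ℝ := fun t => (1 + lam * t) ^ (1 - 1/lam) * t ^ (s - 1) with hB
  have hIA : IntegrableOn A (Set.Ioi 0) := by
    have := integrableOn_deg (lam := lam) (c := -1/lam) (s := s + 1) hl0 (by linarith)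
      (by rw [neg_div]; linarith)
    simpa [hA, add_sub_cancel_right] using this
  have hIB : IntegrableOn B (Set.Ioi 0) := by
    have h1l : s + (1 - 1/lam) < 0 := by linarith
    exact integrableOn_deg hl0 hs h1l
  have hIC : IntegrableOn (fun t : ℝ => (1 + lam * t) ^ (-1/lam) * t ^ (s - 1)) (Set.Ioi 0) :=
    integrableOn_deg hl0 hs (by rw [neg_div]; linarith)
  -- g and its derivative
  set g : ℝ → ℝ := fun t => (1 + lam * t) ^ (1 - 1/lam) * t ^ s with hg
  set f' : ℝ → ℝ := fun t => (lam - 1) * A t + s * B t with hf'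
  have hderiv : ∀ t ∈ Set.Ioi (0:ℝ), HasDerivAt g (f' t) t := by
    intro t ht
    have ht' : (0:ℝ) < t := ht
    have h1 : (0:ℝ) < 1 + lam * t := by positivity
    have hb : HasDerivAt (fun u : ℝ => 1 + lam * u) lam t := by
      simpa using ((hasDerivAt_id t).const_mul lam).const_add 1
    have hd1 : HasDerivAt (fun u : ℝ => (1 + lam * u) ^ (1 - 1/lam))
        (lam * (1 - 1/lam) * (1 + lam * t) ^ (1 - 1/lam - 1)) t :=
      hb.rpow_const (Or.inl h1.ne')
    have hd2 : HasDerivAt (fun u : ℝ => u ^ s) (s * t ^ (s - 1)) t :=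
      Real.hasDerivAt_rpow_const (Or.inl ht'.ne')
    have hmul := hd1.mul hd2
    refine hmul.congr_deriv ?_
    rw [hf']; simp only [hA, hB]
    rw [show (1:ℝ) - 1/lam - 1 = -1/lam by ring,
      show lam * (1 - 1/lam) = lam - 1 by field_simp]
    ring
  -- continuity at 0
  have hc0 : ContinuousWithinAt g (Set.Ici 0) 0 := by
    apply ContinuousWithinAt.mul
    · exact (((continuous_const.add (continuous_const.mul continuous_id)).continuousAt).rpow_const
        (Or.inl (by norm_num))).continuousWithinAt
    · exact (Real.continuousAt_rpow_const 0 s (Or.inr hs.le)).continuousWithinAt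
  -- tendsto 0 at top
  have hTop : Tendsto g atTop (𝓝 0) := by
    have hlim : Tendsto (fun t : ℝ => lam ^ (1 - 1/lam) * t ^ (s + (1 - 1/lam))) atTop (𝓝 0) := by
      have hneg : (0:ℝ) < -(s + (1 - 1/lam)) := by linarith
      have := (tendsto_rpow_neg_atTop hneg).const_mul (lam ^ (1 - 1/lam))
      simpa [neg_neg, mul_zero] using this
    apply squeeze_zero' (g := fun t : ℝ => lam ^ (1 - 1/lam) * t ^ (s + (1 - 1/lam)))
    · filter_upwards [Filter.eventually_gt_atTop 0] with t ht
      have h1 : (0:ℝ) < 1 + lam * t := by positivity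
      rw [hg]; positivity
    · filter_upwards [Filter.eventually_gt_atTop 0] with t ht
      have hlt : (0:ℝ) < lam * t := by positivity
      have hb : (1 + lam * t) ^ (1 - 1/lam) ≤ (lam * t) ^ (1 - 1/lam) :=
        Real.rpow_le_rpow_of_nonpos hlt (by linarith) (by nlinarith)
      calc g t ≤ (lam * t) ^ (1 - 1/lam) * t ^ s :=
            mul_le_mul_of_nonneg_right hb (by positivity)
        _ = lam ^ (1 - 1/lam) * t ^ (s + (1 - 1/lam)) := by
            rw [Real.mul_rpow hl0.le ht.le, Real.rpow_add ht]
            ring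
    · exact hlim
  -- integration by parts
  have hIf' : IntegrableOn f' (Set.Ioi 0) := (hIA.const_mul _).add (hIB.const_mul _)
  have hparts := integral_Ioi_of_hasDerivAt_of_tendsto hc0 hderiv hIf' hTop
  have hg0 : g 0 = 0 := by
    rw [hg]; simp [Real.zero_rpow hs.ne']
  rw [hg0, sub_zero] at hparts
  -- split the integral of f'
  have hsplit : ∫ t in Set.Ioi (0:ℝ), f' t
      = (lam - 1) * (∫ t in Set.Ioi (0:ℝ), A t) + s * (∫ t in Set.Ioi (0:ℝ), B t) := by
    rw [hf', integral_add (hIA.const_mul _) (hIB.const_mul _), integral_const_mul,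
      integral_const_mul]
  -- rewrite B integral
  have hBint : ∫ t in Set.Ioi (0:ℝ), B t
      = degGamma lam s + lam * (∫ t in Set.Ioi (0:ℝ), A t) := by
    have hcong : ∫ t in Set.Ioi (0:ℝ), B t
        = ∫ t in Set.Ioi (0:ℝ),
            ((1 + lam * t) ^ (-1/lam) * t ^ (s - 1) + lam * A t) := by
      apply setIntegral_congr_fun measurableSet_Ioi
      intro t ht
      have ht' : (0:ℝ) < t := ht
      have h1 : (0:ℝ) < 1 + lam * t := by positivity
      rw [hB]; simp only [hA]
      have e1 : (1 + lam * t) ^ (1 - 1/lam) = (1 + lam * t) * (1 + lam * t) ^ (-1/lam) := by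
        rw [show (1:ℝ) - 1/lam = 1 + (-1/lam) by ring, Real.rpow_add h1, Real.rpow_one]
      have e2 : t ^ s = t * t ^ (s - 1) := by
        nth_rewrite 1 [show s = 1 + (s-1) by ring]
        rw [Real.rpow_add ht', Real.rpow_one]
      rw [e1, e2]; ring
    rw [hcong, integral_add hIC (hIA.const_mul _), integral_const_mul, degGamma]
  have hAint : ∫ t in Set.Ioi (0:ℝ), A t = degGamma lam (s + 1) := by
    rw [degGamma, add_sub_cancel_right]
  rw [hsplit, hBint, hAint] at hparts
  linarith [hparts]

theorem degGamma_expectation (lam α β : ℝ) (hlam : lam ∈ Set.Ioo (0:ℝ) 1)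
    (hα : 0 < α) (hβ : 0 < β) (h : α + 2 < 1 / lam) :
    ∫ x : ℝ, x * degGammaPdf lam α β x = α / (β * (1 - lam * (α + 1))) := by
  obtain ⟨hl0, hl1⟩ := hlam
  have he : lam * (1 / lam) = 1 := by field_simp
  have hil : lam * (α + 1) < 1 := by nlinarith [mul_lt_mul_of_pos_left h hl0]
  have hΓpos : 0 < degGamma lam α := degGamma_pos hl0 hα (by linarith)
  have hrec := degGamma_rec hl0 hl1 hα (by linarith)
  set G : ℝ → ℝ := fun t => (1 / degGamma lam α) * ((1 + lam * t) ^ (-1/lam) * t ^ (α + 1 - 1))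
    with hG
  have hind : (fun x => x * degGammaPdf lam α β x)
      = Set.indicator (Set.Ioi 0) (fun x => G (β * x)) := by
    ext x
    by_cases hx : 0 < x
    · have hbx : (0:ℝ) < β * x := by positivity
      rw [Set.indicator_of_mem (by exact hx : x ∈ Set.Ioi 0)]
      rw [degGammaPdf, if_pos hx]; simp only [hG]
      have e2 : (β * x) ^ (α + 1 - 1) = (β * x) * (β * x) ^ (α - 1) := by
        rw [show α + 1 - 1 = 1 + (α - 1) by ring, Real.rpow_add hbx, Real.rpow_one]
      rw [e2, ← mul_assoc lam β x]; ring
    · rw [Set.indicator_of_notMem (by exact hx : x ∉ Set.Ioi 0), degGammaPdf, if_neg hx,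
        mul_zero]
  rw [hind, MeasureTheory.integral_indicator measurableSet_Ioi,
    MeasureTheory.integral_comp_mul_left_Ioi G 0 hβ, mul_zero, smul_eq_mul]
  have hGint : ∫ t in Set.Ioi (0:ℝ), G t = (1 / degGamma lam α) * degGamma lam (α + 1) := by
    rw [hG, MeasureTheory.integral_const_mul]
    rfl
  rw [hGint]
  have hden : (0:ℝ) < 1 - lam * (α + 1) := by linarith
  field_simp
  rw [eq_div_iff (ne_of_gt (by nlinarith))]
  nlinarith [hrec, mul_pos hΓpos hden]
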